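/- Let A* and Â be real m×n matrices with rank(A*) = r, and let P be a best rank-r approximation of Â in spectral norm with rank(P) = r. Then ‖(A*)† − P†‖₂ ≤ 6 ‖(A*)†‖₂ ‖P†‖₂ ‖A* − Â‖₂. -/

import Mathlib

open Matrix MeasureTheory ProbabilityTheory

noncomputable def specNorm {m n : ℕ} (A : Matrix (Fin m) (Fin n) ℝ) : ℝ :=
  ‖LinearMap.toContinuousLinearMap (Matrix.toEuclideanLin A)‖

noncomputable def frobNorm {m n : ℕ} (A : Matrix (Fin m) (Fin n) ℝ) : ℝ :=
  Real.sqrt (∑ i, ∑ j, (A i j) ^ 2)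

/-- The column space (range) of a real matrix. -/
def colSpace {m n : ℕ} (A : Matrix (Fin m) (Fin n) ℝ) : Submodule ℝ (Fin m → ℝ) :=
  LinearMap.range A.mulVecLin

/-- `G` is the Moore-Penrose pseudoinverse of `A`. -/
def IsMPInv {m n : ℕ} (A : Matrix (Fin m) (Fin n) ℝ) (G : Matrix (Fin n) (Fin m) ℝ) : Prop :=
  A * G * A = A ∧ G * A * G = G ∧ (A * G)ᵀ = A * G ∧ (G * A)ᵀ = G * A

open Module
open scoped RealInnerProductSpace

lemma specNorm_nonneg {m n : ℕ} (A : Matrix (Fin m) (Fin n) ℝ) : 0 ≤ specNorm A :=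
  norm_nonneg _

lemma apply_le {m n : ℕ} (A : Matrix (Fin m) (Fin n) ℝ) (x : EuclideanSpace ℝ (Fin n)) :
    ‖Matrix.toEuclideanLin A x‖ ≤ specNorm A * ‖x‖ := by
  have := (LinearMap.toContinuousLinearMap (Matrix.toEuclideanLin A)).le_opNorm x
  simpa [specNorm] using this

lemma specNorm_le_bound {m n : ℕ} (A : Matrix (Fin m) (Fin n) ℝ) {c : ℝ} (hc : 0 ≤ c)
    (h : ∀ x : EuclideanSpace ℝ (Fin n), ‖Matrix.toEuclideanLin A x‖ ≤ c * ‖x‖) :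
    specNorm A ≤ c :=
  ContinuousLinearMap.opNorm_le_bound _ hc (by simpa using h)

lemma tEL_mul {m n k : ℕ} (A : Matrix (Fin m) (Fin n) ℝ) (B : Matrix (Fin n) (Fin k) ℝ)
    (x : EuclideanSpace ℝ (Fin k)) :
    Matrix.toEuclideanLin (A * B) x = Matrix.toEuclideanLin A (Matrix.toEuclideanLin B x) := by
  simp [Matrix.toEuclideanLin_apply, Matrix.mulVec_mulVec]

lemma tEL_one {n : ℕ} (x : EuclideanSpace ℝ (Fin n)) :
    Matrix.toEuclideanLin (1 : Matrix (Fin n) (Fin n) ℝ) x = x := by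
  simp [Matrix.toEuclideanLin_apply]

lemma inner_tEL {m n : ℕ} (M : Matrix (Fin m) (Fin n) ℝ) (x : EuclideanSpace ℝ (Fin n))
    (y : EuclideanSpace ℝ (Fin m)) :
    ⟪Matrix.toEuclideanLin M x, y⟫ = ⟪x, Matrix.toEuclideanLin Mᵀ y⟫ := by
  simp only [Matrix.toEuclideanLin_apply, PiLp.inner_apply, RCLike.inner_apply,
    starRingEnd_apply, star_trivial,
    Matrix.mulVec, dotProduct, Matrix.transpose_apply, Finset.sum_mul, Finset.mul_sum]
  rw [Finset.sum_comm]
  exact Finset.sum_congr rfl fun i _ => Finset.sum_congr rfl fun j _ => by ring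

lemma specNorm_transpose {m n : ℕ} (A : Matrix (Fin m) (Fin n) ℝ) :
    specNorm Aᵀ = specNorm A := by
  have aux : ∀ (a b : ℕ) (B : Matrix (Fin a) (Fin b) ℝ), specNorm Bᵀ ≤ specNorm B := by
    intro a b B
    apply specNorm_le_bound _ (specNorm_nonneg B)
    intro y
    set u := Matrix.toEuclideanLin Bᵀ y with hu
    rcases eq_or_lt_of_le (norm_nonneg u) with h0 | h0
    · rw [← h0]; exact mul_nonneg (specNorm_nonneg B) (norm_nonneg y)
    · have h1 : ‖u‖ * ‖u‖ = ⟪u, u⟫ := (real_inner_self_eq_norm_mul_norm u).symm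
      have h2 : ⟪u, u⟫ = ⟪y, Matrix.toEuclideanLin B u⟫ := by
        rw [hu, inner_tEL, Matrix.transpose_transpose]
      have h3 : ⟪y, Matrix.toEuclideanLin B u⟫ ≤ ‖y‖ * ‖Matrix.toEuclideanLin B u‖ :=
        real_inner_le_norm _ _
      have h4 : ‖Matrix.toEuclideanLin B u‖ ≤ specNorm B * ‖u‖ := apply_le B u
      nlinarith [norm_nonneg y]
  refine le_antisymm (aux _ _ A) ?_
  have := aux _ _ Aᵀ
  rwa [Matrix.transpose_transpose] at this

lemma proj_contract {k : ℕ} {U : Matrix (Fin k) (Fin k) ℝ} (hUs : Uᵀ = U) (hUi : U * U = U)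
    (x : EuclideanSpace ℝ (Fin k)) : ‖Matrix.toEuclideanLin U x‖ ≤ ‖x‖ := by
  set u := Matrix.toEuclideanLin U x with hu
  rcases eq_or_lt_of_le (norm_nonneg u) with h0 | h0
  · rw [← h0]; positivity
  · have h1 : ‖u‖ * ‖u‖ = ⟪u, u⟫ := (real_inner_self_eq_norm_mul_norm u).symm
    have h2 : ⟪u, u⟫ = ⟪x, u⟫ := by
      rw [hu, inner_tEL, hUs, ← tEL_mul, hUi]
    have h3 : ⟪x, u⟫ ≤ ‖x‖ * ‖u‖ := real_inner_le_norm _ _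
    nlinarith

lemma pyth {k : ℕ} {U : Matrix (Fin k) (Fin k) ℝ} (hUs : Uᵀ = U) (hUi : U * U = U)
    (z : EuclideanSpace ℝ (Fin k)) :
    ‖Matrix.toEuclideanLin U z‖ ^ 2 + ‖z - Matrix.toEuclideanLin U z‖ ^ 2 = ‖z‖ ^ 2 := by
  set u := Matrix.toEuclideanLin U z with hu
  have horth : ⟪u, z - u⟫ = 0 := by
    rw [inner_sub_right]
    have hA : ⟪u, z⟫ = ⟪z, u⟫ := real_inner_comm _ _
    have hB : ⟪u, u⟫ = ⟪z, u⟫ := by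
      rw [hu, inner_tEL, hUs, ← tEL_mul, hUi]
    rw [hB, hA, sub_self]
  have hsum : u + (z - u) = z := by abel
  have := norm_add_sq_real u (z - u)
  rw [hsum, horth] at this
  linarith

-- bridge: finrank of range of toEuclideanLin equals Matrix.rank
lemma finrank_range_tEL {a b : ℕ} (M : Matrix (Fin a) (Fin b) ℝ) :
    finrank ℝ (LinearMap.range (Matrix.toEuclideanLin M)) = M.rank := by
  have h : LinearMap.range (Matrix.toEuclideanLin M) =
      Submodule.map ((WithLp.linearEquiv 2 ℝ (Fin a → ℝ)).symm : (Fin a → ℝ) →ₗ[ℝ] EuclideanSpace ℝ (Fin a))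
        (LinearMap.range M.mulVecLin) := by
    ext y
    constructor
    · rintro ⟨x, rfl⟩
      exact ⟨M.mulVecLin ((WithLp.equiv 2 (Fin b → ℝ)) x), ⟨_, rfl⟩, rfl⟩
    · rintro ⟨z, ⟨w, rfl⟩, rfl⟩
      exact ⟨(WithLp.equiv 2 (Fin b → ℝ)).symm w, rfl⟩
  rw [h, Matrix.rank]
  exact LinearEquiv.finrank_map_eq _ _

-- membership in range of symmetric idempotent
lemma mem_range_idem {k : ℕ} {U : Matrix (Fin k) (Fin k) ℝ} (hUi : U * U = U)
    (u : EuclideanSpace ℝ (Fin k)) :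
    u ∈ LinearMap.range (Matrix.toEuclideanLin U) ↔ Matrix.toEuclideanLin U u = u := by
  constructor
  · rintro ⟨w, rfl⟩
    rw [← tEL_mul, hUi]
  · intro h
    exact ⟨u, h⟩

lemma finrank_map_of_disjoint {k l : ℕ} (f : EuclideanSpace ℝ (Fin k) →ₗ[ℝ] EuclideanSpace ℝ (Fin l))
    (p : Submodule ℝ (EuclideanSpace ℝ (Fin k)))
    (hdisj : ∀ u ∈ p, f u = 0 → u = 0) :
    finrank ℝ (Submodule.map f p) = finrank ℝ p := by
  set g := f.comp p.subtype with hg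
  have hker : LinearMap.ker g = ⊥ := by
    rw [LinearMap.ker_eq_bot']
    rintro ⟨u, hu⟩ h
    have : f u = 0 := h
    exact Subtype.ext (hdisj u hu this)
  have hrange : LinearMap.range g = Submodule.map f p := by
    rw [hg, LinearMap.range_comp, Submodule.range_subtype]
  have := LinearMap.finrank_range_add_finrank_ker g
  rw [hker, hrange, finrank_bot] at this
  simpa using this

lemma le_of_sq_le_sq' {a b : ℝ} (ha : 0 ≤ a) (hb : 0 ≤ b) (h : a ^ 2 ≤ b ^ 2) : a ≤ b := by
  have := Real.sqrt_le_sqrt h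
  rwa [Real.sqrt_sq ha, Real.sqrt_sq hb] at this

set_option maxHeartbeats 1000000 in
lemma key_proj {k : ℕ} (U V : Matrix (Fin k) (Fin k) ℝ) (hUs : Uᵀ = U) (hUi : U * U = U)
    (hVs : Vᵀ = V) (hVi : V * V = V) (hr : U.rank = V.rank) :
    specNorm (V * (1 - U)) ≤ specNorm (U * (1 - V)) := by
  set x := specNorm (U * (1 - V)) with hxdef
  have hx0 : 0 ≤ x := specNorm_nonneg _
  have h1Us : (1 - U)ᵀ = 1 - U := by rw [transpose_sub, transpose_one, hUs]
  have h1Ui : (1 - U) * (1 - U) = 1 - U := by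
    have : (1 - U) * (1 - U) = 1 - U - U + U * U := by noncomm_ring
    rw [this, hUi]; abel
  have h1Vs : (1 - V)ᵀ = 1 - V := by rw [transpose_sub, transpose_one, hVs]
  have h1Vi : (1 - V) * (1 - V) = 1 - V := by
    have : (1 - V) * (1 - V) = 1 - V - V + V * V := by noncomm_ring
    rw [this, hVi]; abel
  rcases le_or_gt 1 x with h1 | h1
  · -- trivial case
    refine le_trans (specNorm_le_bound _ zero_le_one fun z => ?_) h1
    rw [tEL_mul, one_mul]
    exact le_trans (proj_contract hVs hVi _) (proj_contract h1Us h1Ui z)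
  · set κ := Real.sqrt (1 - x ^ 2) with hκdef
    have hκpos : 0 < κ := Real.sqrt_pos.mpr (by nlinarith)
    have hκsq : κ ^ 2 = 1 - x ^ 2 := Real.sq_sqrt (by nlinarith)
    -- Step A
    have stepA : ∀ u : EuclideanSpace ℝ (Fin k), Matrix.toEuclideanLin U u = u →
        κ * ‖u‖ ≤ ‖Matrix.toEuclideanLin V u‖ := by
      intro u hu
      have e1 : u - Matrix.toEuclideanLin V u = Matrix.toEuclideanLin ((1 - V) * U) u := by
        rw [tEL_mul, hu, map_sub]
        simp [LinearMap.sub_apply, tEL_one]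
      have e2 : specNorm ((1 - V) * U) = x := by
        have : (1 - V) * U = (U * (1 - V))ᵀ := by rw [transpose_mul, h1Vs, hUs]
        rw [this, specNorm_transpose]
      have h2 : ‖u - Matrix.toEuclideanLin V u‖ ≤ x * ‖u‖ := by
        rw [e1, ← e2]; exact apply_le _ _
      have hp := pyth hVs hVi u
      have hsq : (κ * ‖u‖) ^ 2 ≤ ‖Matrix.toEuclideanLin V u‖ ^ 2 := by
        have hb2 : ‖u - Matrix.toEuclideanLin V u‖ ^ 2 ≤ (x * ‖u‖) ^ 2 := by
          have := mul_le_mul h2 h2 (norm_nonneg _) (mul_nonneg hx0 (norm_nonneg u))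
          nlinarith
        nlinarith [hp, hκsq, sq_nonneg ‖u‖]
      exact le_of_sq_le_sq' (mul_nonneg hκpos.le (norm_nonneg u)) (norm_nonneg _) hsq
    -- Step B
    have stepB : LinearMap.range (Matrix.toEuclideanLin (V * U)) =
        LinearMap.range (Matrix.toEuclideanLin V) := by
      have hle : LinearMap.range (Matrix.toEuclideanLin (V * U)) ≤
          LinearMap.range (Matrix.toEuclideanLin V) := by
        rintro y ⟨z, rfl⟩
        exact ⟨Matrix.toEuclideanLin U z, (tEL_mul V U z).symm⟩
      have hmap : LinearMap.range (Matrix.toEuclideanLin (V * U)) =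
          Submodule.map (Matrix.toEuclideanLin V)
            (LinearMap.range (Matrix.toEuclideanLin U)) := by
        ext y
        constructor
        · rintro ⟨z, rfl⟩
          exact ⟨Matrix.toEuclideanLin U z, ⟨z, rfl⟩, (tEL_mul V U z).symm⟩
        · rintro ⟨u, ⟨z, rfl⟩, rfl⟩
          exact ⟨z, tEL_mul V U z⟩
      have hd : ∀ u ∈ LinearMap.range (Matrix.toEuclideanLin U),
          Matrix.toEuclideanLin V u = 0 → u = 0 := by
        intro u hu h0
        have hu' := (mem_range_idem hUi u).mp hu
        have := stepA u hu'
        rw [h0, norm_zero] at this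
        have : ‖u‖ ≤ 0 := by nlinarith
        simpa using le_antisymm this (norm_nonneg u)
      have hfr : finrank ℝ (LinearMap.range (Matrix.toEuclideanLin (V * U))) =
          finrank ℝ (LinearMap.range (Matrix.toEuclideanLin V)) := by
        rw [hmap, finrank_map_of_disjoint _ _ hd, finrank_range_tEL, finrank_range_tEL, hr]
      exact Submodule.eq_of_le_of_finrank_eq hle hfr
    -- Step C
    have stepC : ∀ v : EuclideanSpace ℝ (Fin k), Matrix.toEuclideanLin V v = v →
        κ * ‖v‖ ≤ ‖Matrix.toEuclideanLin U v‖ := by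
      intro v hv
      rcases eq_or_ne v 0 with rfl | hv0
      · simp
      have hvmem : v ∈ LinearMap.range (Matrix.toEuclideanLin (V * U)) := by
        rw [stepB]; exact ⟨v, hv⟩
      obtain ⟨z, hz⟩ := hvmem
      set u₀ := Matrix.toEuclideanLin U z with hu₀def
      have hu₀ : Matrix.toEuclideanLin U u₀ = u₀ := by
        rw [hu₀def, ← tEL_mul, hUi]
      have hVu₀ : Matrix.toEuclideanLin V u₀ = v := by
        rw [hu₀def, ← tEL_mul, hz]
      have h1 : κ * ‖u₀‖ ≤ ‖v‖ := by
        have := stepA u₀ hu₀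
        rwa [hVu₀] at this
      have h2 : ⟪Matrix.toEuclideanLin U v, u₀⟫ = ‖v‖ ^ 2 := by
        calc ⟪Matrix.toEuclideanLin U v, u₀⟫
            = ⟪v, Matrix.toEuclideanLin Uᵀ u₀⟫ := inner_tEL U v u₀
          _ = ⟪v, u₀⟫ := by rw [hUs, hu₀]
          _ = ⟪Matrix.toEuclideanLin V v, u₀⟫ := by rw [hv]
          _ = ⟪v, Matrix.toEuclideanLin Vᵀ u₀⟫ := inner_tEL V v u₀
          _ = ⟪v, v⟫ := by rw [hVs, hVu₀]
          _ = ‖v‖ ^ 2 := real_inner_self_eq_norm_sq v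
      have h3 : ‖v‖ ^ 2 ≤ ‖Matrix.toEuclideanLin U v‖ * ‖u₀‖ := by
        rw [← h2]; exact real_inner_le_norm _ _
      have hvpos : 0 < ‖v‖ := norm_pos_iff.mpr hv0
      nlinarith [mul_le_mul_of_nonneg_left h3 hκpos.le,
        mul_le_mul_of_nonneg_left h1 (norm_nonneg (Matrix.toEuclideanLin U v)),
        norm_nonneg (Matrix.toEuclideanLin U v), norm_nonneg u₀]
    -- conclusion
    have htr : specNorm (V * (1 - U)) = specNorm ((1 - U) * V) := by
      have : V * (1 - U) = ((1 - U) * V)ᵀ := by rw [transpose_mul, h1Us, hVs]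
      rw [this, specNorm_transpose]
    rw [htr]
    apply specNorm_le_bound _ hx0
    intro z
    rw [tEL_mul]
    set v := Matrix.toEuclideanLin V z with hvdef
    have hv : Matrix.toEuclideanLin V v = v := by rw [hvdef, ← tEL_mul, hVi]
    have hvz : ‖v‖ ≤ ‖z‖ := proj_contract hVs hVi z
    have hp := pyth hUs hUi v
    have hC := stepC v hv
    have e3 : Matrix.toEuclideanLin (1 - U) v = v - Matrix.toEuclideanLin U v := by
      rw [map_sub]
      simp [LinearMap.sub_apply, tEL_one]
    rw [e3]
    have hb : ‖v - Matrix.toEuclideanLin U v‖ ≤ x * ‖v‖ := by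
      apply le_of_sq_le_sq' (norm_nonneg _) (mul_nonneg hx0 (norm_nonneg v))
      have hCsq : (κ * ‖v‖) ^ 2 ≤ ‖Matrix.toEuclideanLin U v‖ ^ 2 := by
        have := mul_le_mul hC hC (mul_nonneg hκpos.le (norm_nonneg v)) (norm_nonneg _)
        nlinarith
      nlinarith [hp, hκsq, sq_nonneg (‖v‖)]
    calc ‖v - Matrix.toEuclideanLin U v‖ ≤ x * ‖v‖ := hb
      _ ≤ x * ‖z‖ := mul_le_mul_of_nonneg_left hvz hx0

lemma specNorm_mul_le {a b c : ℕ} (A : Matrix (Fin a) (Fin b) ℝ) (B : Matrix (Fin b) (Fin c) ℝ) :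
    specNorm (A * B) ≤ specNorm A * specNorm B := by
  apply specNorm_le_bound _ (mul_nonneg (specNorm_nonneg A) (specNorm_nonneg B))
  intro z
  rw [tEL_mul]
  calc ‖Matrix.toEuclideanLin A (Matrix.toEuclideanLin B z)‖
      ≤ specNorm A * ‖Matrix.toEuclideanLin B z‖ := apply_le _ _
    _ ≤ specNorm A * (specNorm B * ‖z‖) :=
        mul_le_mul_of_nonneg_left (apply_le _ _) (specNorm_nonneg A)
    _ = specNorm A * specNorm B * ‖z‖ := by ring

lemma specNorm_add_le {a b : ℕ} (A B : Matrix (Fin a) (Fin b) ℝ) :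
    specNorm (A + B) ≤ specNorm A + specNorm B := by
  apply specNorm_le_bound _ (add_nonneg (specNorm_nonneg A) (specNorm_nonneg B))
  intro z
  rw [map_add]
  calc ‖(Matrix.toEuclideanLin A + Matrix.toEuclideanLin B) z‖
      = ‖Matrix.toEuclideanLin A z + Matrix.toEuclideanLin B z‖ := by
        rw [LinearMap.add_apply]
    _ ≤ ‖Matrix.toEuclideanLin A z‖ + ‖Matrix.toEuclideanLin B z‖ := norm_add_le _ _
    _ ≤ specNorm A * ‖z‖ + specNorm B * ‖z‖ := add_le_add (apply_le _ _) (apply_le _ _)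
    _ = (specNorm A + specNorm B) * ‖z‖ := by ring

lemma specNorm_neg {a b : ℕ} (A : Matrix (Fin a) (Fin b) ℝ) : specNorm (-A) = specNorm A := by
  have h : ∀ C : Matrix (Fin a) (Fin b) ℝ, specNorm (-C) ≤ specNorm C := by
    intro C
    apply specNorm_le_bound _ (specNorm_nonneg C)
    intro z
    rw [map_neg]
    calc ‖(-Matrix.toEuclideanLin C) z‖ = ‖Matrix.toEuclideanLin C z‖ := by
          rw [LinearMap.neg_apply, norm_neg]
      _ ≤ specNorm C * ‖z‖ := apply_le _ _
  refine le_antisymm (h A) ?_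
  have := h (-A)
  rwa [neg_neg] at this

lemma specNorm_sub_comm {a b : ℕ} (A B : Matrix (Fin a) (Fin b) ℝ) :
    specNorm (A - B) = specNorm (B - A) := by
  rw [← specNorm_neg (A - B), neg_sub]

lemma projNorm_le_one {k : ℕ} {W : Matrix (Fin k) (Fin k) ℝ} (hWs : Wᵀ = W)
    (hWi : W * W = W) : specNorm W ≤ 1 := by
  apply specNorm_le_bound _ zero_le_one
  intro z
  rw [one_mul]
  exact proj_contract hWs hWi z

lemma rank_AG {a b : ℕ} {A : Matrix (Fin a) (Fin b) ℝ} {G : Matrix (Fin b) (Fin a) ℝ}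
    (h : A * G * A = A) : (A * G).rank = A.rank := by
  refine le_antisymm (rank_mul_le_left A G) ?_
  conv_lhs => rw [← h]
  exact rank_mul_le_left (A * G) A

lemma rank_GA {a b : ℕ} {A : Matrix (Fin a) (Fin b) ℝ} {G : Matrix (Fin b) (Fin a) ℝ}
    (h : A * G * A = A) : (G * A).rank = A.rank := by
  refine le_antisymm (rank_mul_le_right G A) ?_
  have h2 : A * (G * A) = A := by rw [← Matrix.mul_assoc, h]
  conv_lhs => rw [← h2]
  exact rank_mul_le_right A (G * A)

lemma idem_AG {a b : ℕ} {A : Matrix (Fin a) (Fin b) ℝ} {G : Matrix (Fin b) (Fin a) ℝ}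
    (h : A * G * A = A) : (A * G) * (A * G) = A * G := by
  have e : (A * G) * (A * G) = (A * G * A) * G := by rw [← Matrix.mul_assoc]
  rw [e, h]

lemma idem_GA {a b : ℕ} {A : Matrix (Fin a) (Fin b) ℝ} {G : Matrix (Fin b) (Fin a) ℝ}
    (h : A * G * A = A) : (G * A) * (G * A) = G * A := by
  have e : (G * A) * (G * A) = G * (A * G * A) := by
    rw [Matrix.mul_assoc G A (G * A), ← Matrix.mul_assoc A G A]
  rw [e, h]

lemma one_sub_symm {k : ℕ} {W : Matrix (Fin k) (Fin k) ℝ} (h : Wᵀ = W) :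
    (1 - W)ᵀ = 1 - W := by
  rw [transpose_sub, transpose_one, h]

lemma one_sub_idem {k : ℕ} {W : Matrix (Fin k) (Fin k) ℝ} (h : W * W = W) :
    (1 - W) * (1 - W) = 1 - W := by
  have e : (1 - W) * (1 - W) = 1 - W - W + W * W := by noncomm_ring
  rw [e, h]; abel

lemma specNorm_sub_le {a b : ℕ} (A B : Matrix (Fin a) (Fin b) ℝ) :
    specNorm (A - B) ≤ specNorm A + specNorm B := by
  rw [sub_eq_add_neg]
  exact (specNorm_add_le A (-B)).trans (by rw [specNorm_neg])

lemma transpose_fix {a b : ℕ} {B : Matrix (Fin a) (Fin b) ℝ} {H : Matrix (Fin b) (Fin a) ℝ}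
    (hBHB : B * H * B = B) (hBHt : (B * H)ᵀ = B * H) : Bᵀ * (B * H) = Bᵀ := by
  calc Bᵀ * (B * H) = Bᵀ * (B * H)ᵀ := by rw [hBHt]
    _ = Bᵀ * (Hᵀ * Bᵀ) := by rw [transpose_mul]
    _ = (B * H * B)ᵀ := by rw [transpose_mul (B * H) B, transpose_mul B H]
    _ = Bᵀ := by rw [hBHB]

theorem stmt7 {m n r : ℕ} (Astar Ahat P : Matrix (Fin m) (Fin n) ℝ)
    (hA : Astar.rank = r) (hP : P.rank = r)
    (hbest : ∀ M : Matrix (Fin m) (Fin n) ℝ, M.rank ≤ r →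
      specNorm (Ahat - P) ≤ specNorm (Ahat - M))
    (Ad : Matrix (Fin n) (Fin m) ℝ) (hAd : IsMPInv Astar Ad)
    (Pd : Matrix (Fin n) (Fin m) ℝ) (hPd : IsMPInv P Pd) :
    specNorm (Ad - Pd) ≤ 6 * specNorm Ad * specNorm Pd * specNorm (Astar - Ahat) := by
  obtain ⟨hAGA, hGAG, hAGt, hGAt⟩ := hAd
  obtain ⟨hBHB, hHBH, hBHt, hHBt⟩ := hPd
  set δ := specNorm (Astar - Ahat) with hδdef
  have hδ0 : 0 ≤ δ := specNorm_nonneg _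
  have hSA : 0 ≤ specNorm Ad := specNorm_nonneg _
  have hSP : 0 ≤ specNorm Pd := specNorm_nonneg _
  -- ‖Astar - P‖ ≤ 2δ
  have heps : specNorm (Astar - P) ≤ 2 * δ := by
    have h1 : Astar - P = (Astar - Ahat) + (Ahat - P) := by abel
    have h2 := hbest Astar (le_of_eq hA)
    rw [specNorm_sub_comm Ahat Astar] at h2
    calc specNorm (Astar - P) = specNorm ((Astar - Ahat) + (Ahat - P)) := by rw [← h1]
      _ ≤ specNorm (Astar - Ahat) + specNorm (Ahat - P) := specNorm_add_le _ _
      _ ≤ δ + δ := add_le_add le_rfl h2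
      _ = 2 * δ := by ring
  have hepsPA : specNorm (P - Astar) ≤ 2 * δ := by
    rw [specNorm_sub_comm]; exact heps
  -- projections
  have hU1i : (Astar * Ad) * (Astar * Ad) = Astar * Ad := idem_AG hAGA
  have hV1i : (P * Pd) * (P * Pd) = P * Pd := idem_AG hBHB
  have hU2i : (Pd * P) * (Pd * P) = Pd * P := idem_GA hBHB
  have hV2i : (Ad * Astar) * (Ad * Astar) = Ad * Astar := idem_GA hAGA
  -- ranks
  have hrank1 : (Astar * Ad).rank = (P * Pd).rank := by
    rw [rank_AG hAGA, rank_AG hBHB, hA, hP]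
  have hrank2 : (Pd * P).rank = (Ad * Astar).rank := by
    rw [rank_GA hBHB, rank_GA hAGA, hA, hP]
  -- decomposition identity
  have hid : Ad - Pd =
      Pd * (P - Astar) * Ad - Pd * (1 - Astar * Ad) + (1 - Pd * P) * Ad := by
    simp only [Matrix.mul_sub, Matrix.sub_mul, Matrix.mul_one, Matrix.one_mul,
      Matrix.mul_assoc]
    abel
  -- term 1
  have ht1 : specNorm (Pd * (P - Astar) * Ad) ≤ specNorm Pd * (2 * δ) * specNorm Ad := by
    calc specNorm (Pd * (P - Astar) * Ad)
        ≤ specNorm (Pd * (P - Astar)) * specNorm Ad := specNorm_mul_le _ _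
      _ ≤ (specNorm Pd * specNorm (P - Astar)) * specNorm Ad :=
          mul_le_mul_of_nonneg_right (specNorm_mul_le _ _) hSA
      _ ≤ (specNorm Pd * (2 * δ)) * specNorm Ad :=
          mul_le_mul_of_nonneg_right (mul_le_mul_of_nonneg_left hepsPA hSP) hSA
  -- term 2
  have ht2 : specNorm (Pd * (1 - Astar * Ad)) ≤ specNorm Pd * (specNorm Ad * (2 * δ)) := by
    have e1 : Pd * (1 - Astar * Ad) = Pd * ((P * Pd) * (1 - Astar * Ad)) := by
      have : Pd * (P * Pd) = Pd := by rw [← Matrix.mul_assoc, hHBH]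
      calc Pd * (1 - Astar * Ad) = (Pd * (P * Pd)) * (1 - Astar * Ad) := by rw [this]
        _ = Pd * ((P * Pd) * (1 - Astar * Ad)) := Matrix.mul_assoc _ _ _
    have hkey : specNorm ((P * Pd) * (1 - Astar * Ad)) ≤
        specNorm ((Astar * Ad) * (1 - P * Pd)) :=
      key_proj (Astar * Ad) (P * Pd) hAGt hU1i hBHt hV1i hrank1
    have e2 : (Astar * Ad) * (1 - P * Pd) = Adᵀ * (Astarᵀ - Pᵀ) * (1 - P * Pd) := by
      have h1 : Adᵀ * Astarᵀ = Astar * Ad := by rw [← transpose_mul, hAGt]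
      have h2 : Pᵀ * (P * Pd) = Pᵀ := transpose_fix hBHB hBHt
      have e3 : Adᵀ * (Astarᵀ - Pᵀ) * (1 - P * Pd) =
          Adᵀ * Astarᵀ * (1 - P * Pd) - Adᵀ * (Pᵀ - Pᵀ * (P * Pd)) := by
        simp only [Matrix.mul_sub, Matrix.sub_mul, Matrix.mul_one, Matrix.one_mul,
          Matrix.mul_assoc]
        abel
      rw [e3, h1, h2, sub_self, Matrix.mul_zero, sub_zero]
    have hb2 : specNorm ((Astar * Ad) * (1 - P * Pd)) ≤ specNorm Ad * (2 * δ) := by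
      rw [e2]
      have hps : specNorm (1 - P * Pd) ≤ 1 := projNorm_le_one (one_sub_symm hBHt) (one_sub_idem hV1i)
      have hT : specNorm (Astarᵀ - Pᵀ) ≤ 2 * δ := by
        have : Astarᵀ - Pᵀ = (Astar - P)ᵀ := by rw [transpose_sub]
        rw [this, specNorm_transpose]; exact heps
      calc specNorm (Adᵀ * (Astarᵀ - Pᵀ) * (1 - P * Pd))
          ≤ specNorm (Adᵀ * (Astarᵀ - Pᵀ)) * specNorm (1 - P * Pd) := specNorm_mul_le _ _
        _ ≤ specNorm (Adᵀ * (Astarᵀ - Pᵀ)) * 1 :=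
            mul_le_mul_of_nonneg_left hps (specNorm_nonneg _)
        _ = specNorm (Adᵀ * (Astarᵀ - Pᵀ)) := mul_one _
        _ ≤ specNorm Adᵀ * specNorm (Astarᵀ - Pᵀ) := specNorm_mul_le _ _
        _ ≤ specNorm Adᵀ * (2 * δ) :=
            mul_le_mul_of_nonneg_left hT (specNorm_nonneg _)
        _ = specNorm Ad * (2 * δ) := by rw [specNorm_transpose]
    calc specNorm (Pd * (1 - Astar * Ad))
        = specNorm (Pd * ((P * Pd) * (1 - Astar * Ad))) := by rw [← e1]
      _ ≤ specNorm Pd * specNorm ((P * Pd) * (1 - Astar * Ad)) := specNorm_mul_le _ _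
      _ ≤ specNorm Pd * specNorm ((Astar * Ad) * (1 - P * Pd)) :=
          mul_le_mul_of_nonneg_left hkey hSP
      _ ≤ specNorm Pd * (specNorm Ad * (2 * δ)) :=
          mul_le_mul_of_nonneg_left hb2 hSP
  -- term 3
  have ht3 : specNorm ((1 - Pd * P) * Ad) ≤ specNorm Pd * (2 * δ) * specNorm Ad := by
    have e1 : (1 - Pd * P) * Ad = ((1 - Pd * P) * (Ad * Astar)) * Ad := by
      have hAdfix : (Ad * Astar) * Ad = Ad := hGAG
      calc (1 - Pd * P) * Ad = (1 - Pd * P) * ((Ad * Astar) * Ad) := by rw [hAdfix]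
        _ = ((1 - Pd * P) * (Ad * Astar)) * Ad := (Matrix.mul_assoc _ _ _).symm
    have e2 : specNorm ((1 - Pd * P) * (Ad * Astar)) =
        specNorm ((Ad * Astar) * (1 - Pd * P)) := by
      have h1 : (1 - Pd * P) * (Ad * Astar) = ((Ad * Astar) * (1 - Pd * P))ᵀ := by
        rw [transpose_mul, one_sub_symm hHBt, hGAt]
      rw [h1, specNorm_transpose]
    have hkey : specNorm ((Ad * Astar) * (1 - Pd * P)) ≤
        specNorm ((Pd * P) * (1 - Ad * Astar)) :=
      key_proj (Pd * P) (Ad * Astar) hHBt hU2i hGAt hV2i hrank2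
    have e3 : (Pd * P) * (1 - Ad * Astar) = Pd * (P - Astar) * (1 - Ad * Astar) := by
      have h3 : Astar * (Ad * Astar) = Astar := by rw [← Matrix.mul_assoc, hAGA]
      have e4 : Pd * (P - Astar) * (1 - Ad * Astar) =
          (Pd * P) * (1 - Ad * Astar) - Pd * (Astar - Astar * (Ad * Astar)) := by
        simp only [Matrix.mul_sub, Matrix.sub_mul, Matrix.mul_one, Matrix.one_mul,
          Matrix.mul_assoc]
        abel
      rw [e4, h3, sub_self, Matrix.mul_zero, sub_zero]
    have hb3 : specNorm ((Pd * P) * (1 - Ad * Astar)) ≤ specNorm Pd * (2 * δ) := by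
      rw [e3]
      have hps : specNorm (1 - Ad * Astar) ≤ 1 :=
        projNorm_le_one (one_sub_symm hGAt) (one_sub_idem hV2i)
      calc specNorm (Pd * (P - Astar) * (1 - Ad * Astar))
          ≤ specNorm (Pd * (P - Astar)) * specNorm (1 - Ad * Astar) := specNorm_mul_le _ _
        _ ≤ specNorm (Pd * (P - Astar)) * 1 :=
            mul_le_mul_of_nonneg_left hps (specNorm_nonneg _)
        _ = specNorm (Pd * (P - Astar)) := mul_one _
        _ ≤ specNorm Pd * specNorm (P - Astar) := specNorm_mul_le _ _
        _ ≤ specNorm Pd * (2 * δ) := mul_le_mul_of_nonneg_left hepsPA hSP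
    calc specNorm ((1 - Pd * P) * Ad)
        = specNorm (((1 - Pd * P) * (Ad * Astar)) * Ad) := by rw [← e1]
      _ ≤ specNorm ((1 - Pd * P) * (Ad * Astar)) * specNorm Ad := specNorm_mul_le _ _
      _ = specNorm ((Ad * Astar) * (1 - Pd * P)) * specNorm Ad := by rw [e2]
      _ ≤ specNorm ((Pd * P) * (1 - Ad * Astar)) * specNorm Ad :=
          mul_le_mul_of_nonneg_right hkey hSA
      _ ≤ (specNorm Pd * (2 * δ)) * specNorm Ad :=
          mul_le_mul_of_nonneg_right hb3 hSA
  -- combine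
  have hsplit : specNorm (Ad - Pd) ≤ specNorm (Pd * (P - Astar) * Ad) +
      specNorm (Pd * (1 - Astar * Ad)) + specNorm ((1 - Pd * P) * Ad) := by
    rw [hid]
    calc specNorm (Pd * (P - Astar) * Ad - Pd * (1 - Astar * Ad) + (1 - Pd * P) * Ad)
        ≤ specNorm (Pd * (P - Astar) * Ad - Pd * (1 - Astar * Ad)) +
            specNorm ((1 - Pd * P) * Ad) := specNorm_add_le _ _
      _ ≤ specNorm (Pd * (P - Astar) * Ad) + specNorm (Pd * (1 - Astar * Ad)) +
            specNorm ((1 - Pd * P) * Ad) :=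
          add_le_add_left (specNorm_sub_le _ _) _
  have hfinal : specNorm Pd * (2 * δ) * specNorm Ad + specNorm Pd * (specNorm Ad * (2 * δ)) +
      specNorm Pd * (2 * δ) * specNorm Ad = 6 * specNorm Ad * specNorm Pd * δ := by ring
  linarith [hsplit, ht1, ht2, ht3]
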